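/- arXiv:2309.08729 — 3 statements merged into one kernel-verified Lean document; each statement's English description precedes it below -/
import Mathlib

section
/- Landau's theorem: Let A : [1,∞) → ℝ be locally integrable and suppose that A is eventually of one sign (there exists X ≥ 1 such that A(x) ≥ 0 for all x ≥ X, or A(x) ≤ 0 for all x ≥ X). Let σ₀ be a real number such that the integral g(s) = ∫₁^∞ A(x) x^{-s} dx converges for every real s = σ > σ₀ and diverges for every real s = σ < σ₀. Then the holomorphic function g on the half-plane {s ∈ ℂ : Re s > σ₀} has a singularity at s = σ₀: there is no open disc centered at σ₀ and holomorphic function on it agreeing with g on the intersection of the disc with the half-plane {Re s > σ₀}. -/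
open MeasureTheory Filter Set

namespace LandauAux

/-- The `n`-th derivative candidate. -/
noncomputable def F (A : ℝ → ℝ) (n : ℕ) (s : ℂ) : ℂ :=
  ∫ x in Set.Ioi (1:ℝ), (A x : ℂ) * (-(Real.log x : ℂ)) ^ n * (x : ℂ) ^ (-s)

variable {A : ℝ → ℝ} {σ₀ : ℝ}

lemma aesm_A (hA : LocallyIntegrableOn A (Set.Ici 1)) {t : Set ℝ} (ht : t ⊆ Set.Ici 1) :
    AEStronglyMeasurable A (volume.restrict t) :=
  (hA.mono_set ht).aestronglyMeasurable

lemma contOn_rpow (c : ℝ) {t : Set ℝ} (ht : t ⊆ Set.Ioi 0) :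
    ContinuousOn (fun x : ℝ => x ^ c) t :=
  ContinuousOn.rpow_const continuousOn_id fun x hx => Or.inl (ne_of_gt (ht hx))

lemma contOn_logpow (n : ℕ) {t : Set ℝ} (ht : t ⊆ Set.Ioi 0) :
    ContinuousOn (fun x : ℝ => (Real.log x) ^ n) t :=
  ((Real.continuousOn_log.mono (fun x hx => ne_of_gt (ht hx))).pow n)

lemma contOn_cpow (s : ℂ) {t : Set ℝ} (ht : t ⊆ Set.Ioi 0) :
    ContinuousOn (fun x : ℝ => (x : ℂ) ^ (-s)) t := by
  intro x hx
  exact ((continuousAt_cpow_const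
    (Complex.ofReal_mem_slitPlane.mpr (ht hx))).comp
    Complex.continuous_ofReal.continuousAt).continuousWithinAt

lemma contOn_neglogpowC (n : ℕ) {t : Set ℝ} (ht : t ⊆ Set.Ioi 0) :
    ContinuousOn (fun x : ℝ => (-(Real.log x : ℂ)) ^ n) t :=
  (((Complex.continuous_ofReal.comp_continuousOn
    (Real.continuousOn_log.mono fun x hx => ne_of_gt (ht hx))).neg).pow n)

/-- integrability of `|A x| x^{-σ}`. -/
lemma habs (hconv : ∀ σ : ℝ, σ₀ < σ →
      IntegrableOn (fun x : ℝ => A x * x ^ (-σ)) (Set.Ioi (1 : ℝ)))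
    {σ : ℝ} (hσ : σ₀ < σ) :
    IntegrableOn (fun x : ℝ => |A x| * x ^ (-σ)) (Set.Ioi (1:ℝ)) := by
  refine ((hconv σ hσ).abs).congr ?_
  filter_upwards [ae_restrict_mem measurableSet_Ioi] with x hx
  have hx0 : (0:ℝ) < x := lt_trans one_pos hx
  rw [abs_mul, abs_of_pos (Real.rpow_pos_of_pos hx0 _)]

/-- integrability of `|A x| (log x)^n x^{-σ}`. -/
lemma hlog (hA : LocallyIntegrableOn A (Set.Ici 1))
    (hconv : ∀ σ : ℝ, σ₀ < σ →
      IntegrableOn (fun x : ℝ => A x * x ^ (-σ)) (Set.Ioi (1 : ℝ)))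
    {σ : ℝ} (hσ : σ₀ < σ) (n : ℕ) :
    IntegrableOn (fun x : ℝ => |A x| * (Real.log x) ^ n * x ^ (-σ)) (Set.Ioi (1:ℝ)) := by
  set σ' : ℝ := (σ₀ + σ) / 2 with hσ'def
  have hσ'₁ : σ₀ < σ' := by rw [hσ'def]; linarith
  have hσ'₂ : σ' < σ := by rw [hσ'def]; linarith
  set ε : ℝ := (σ - σ') / (n + 1) with hεdef
  have hε0 : 0 < ε := by
    rw [hεdef]; exact div_pos (by linarith) (by positivity)
  refine (((habs hconv hσ'₁).const_mul ((ε⁻¹) ^ n)).mono' ?_ ?_)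
  · exact (((aesm_A hA Set.Ioi_subset_Ici_self).norm.mul
      ((contOn_logpow n (fun x hx => Set.mem_Ioi.mpr (lt_trans one_pos (Set.mem_Ioi.mp hx)))).aestronglyMeasurable
        measurableSet_Ioi)).mul
      ((contOn_rpow (-σ) (fun x hx => Set.mem_Ioi.mpr (lt_trans one_pos (Set.mem_Ioi.mp hx)))).aestronglyMeasurable
        measurableSet_Ioi))
  · filter_upwards [ae_restrict_mem measurableSet_Ioi] with x hx
    have hx1 : (1:ℝ) ≤ x := le_of_lt hx
    have hx0 : (0:ℝ) < x := lt_trans one_pos hx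
    have hlog0 : 0 ≤ Real.log x := Real.log_nonneg hx1
    have hpow : (Real.log x) ^ n ≤ ε⁻¹ ^ n * x ^ ((n : ℝ) * ε) := by
      have h1 : Real.log x ≤ x ^ ε / ε := Real.log_le_rpow_div hx0.le hε0
      calc (Real.log x) ^ n ≤ (x ^ ε / ε) ^ n := pow_le_pow_left₀ hlog0 h1 n
        _ = ε⁻¹ ^ n * (x ^ ε) ^ n := by rw [div_pow]; ring
        _ = ε⁻¹ ^ n * x ^ ((n : ℝ) * ε) := by
            rw [← Real.rpow_natCast (x ^ ε) n, ← Real.rpow_mul hx0.le, mul_comm ε]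
    have hexp : x ^ ((n : ℝ) * ε) * x ^ (-σ) ≤ x ^ (-σ') := by
      rw [← Real.rpow_add hx0]
      refine Real.rpow_le_rpow_of_exponent_le hx1 ?_
      have hnε : (n : ℝ) * ε ≤ σ - σ' := by
        rw [hεdef]
        rw [div_eq_iff (by positivity : ((n:ℝ)+1) ≠ 0)] at *
        have : (n : ℝ) ≤ (n : ℝ) + 1 := by linarith
        calc (n : ℝ) * ((σ - σ') / (n + 1)) ≤ ((n:ℝ)+1) * ((σ - σ') / (n + 1)) := by
              apply mul_le_mul_of_nonneg_right this
              positivity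
          _ = σ - σ' := by field_simp
      linarith
    have key : (Real.log x) ^ n * x ^ (-σ) ≤ ε⁻¹ ^ n * x ^ (-σ') := by
      calc (Real.log x) ^ n * x ^ (-σ)
          ≤ (ε⁻¹ ^ n * x ^ ((n : ℝ) * ε)) * x ^ (-σ) := by
            apply mul_le_mul_of_nonneg_right hpow (Real.rpow_pos_of_pos hx0 _).le
        _ = ε⁻¹ ^ n * (x ^ ((n : ℝ) * ε) * x ^ (-σ)) := by ring
        _ ≤ ε⁻¹ ^ n * x ^ (-σ') := by
            apply mul_le_mul_of_nonneg_left hexp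
            positivity
    have hnn : 0 ≤ |A x| * (Real.log x) ^ n * x ^ (-σ) := by positivity
    rw [Real.norm_eq_abs, abs_of_nonneg hnn]
    calc |A x| * (Real.log x) ^ n * x ^ (-σ)
        = |A x| * ((Real.log x) ^ n * x ^ (-σ)) := by ring
      _ ≤ |A x| * (ε⁻¹ ^ n * x ^ (-σ')) := by
          exact mul_le_mul_of_nonneg_left key (abs_nonneg _)
      _ = ε⁻¹ ^ n * (|A x| * x ^ (-σ')) := by ring

lemma norm_integrand {x : ℝ} (hx : (1:ℝ) < x) (n : ℕ) (t : ℂ) :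
    ‖(A x : ℂ) * (-(Real.log x : ℂ)) ^ n * (x : ℂ) ^ (-t)‖
      = |A x| * (Real.log x) ^ n * x ^ (-t.re) := by
  have hx0 : (0:ℝ) < x := lt_trans one_pos hx
  simp only [norm_mul, norm_pow, norm_neg, Complex.norm_real,
    Complex.norm_cpow_eq_rpow_re_of_pos hx0, Complex.neg_re,
    Real.norm_eq_abs, abs_of_nonneg (Real.log_nonneg hx.le)]

lemma aesm_c (hA : LocallyIntegrableOn A (Set.Ici 1)) (n : ℕ) (t : ℂ) :
    AEStronglyMeasurable (fun x : ℝ => (A x : ℂ) * (-(Real.log x : ℂ)) ^ n * (x : ℂ) ^ (-t))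
      (volume.restrict (Set.Ioi (1:ℝ))) := by
  have h01 : Set.Ioi (1:ℝ) ⊆ Set.Ioi 0 := fun x hx => Set.mem_Ioi.mpr (lt_trans one_pos (Set.mem_Ioi.mp hx))
  exact (((Complex.continuous_ofReal.comp_aestronglyMeasurable
      (aesm_A hA Set.Ioi_subset_Ici_self)).mul
    ((contOn_neglogpowC n h01).aestronglyMeasurable measurableSet_Ioi)).mul
    ((contOn_cpow t h01).aestronglyMeasurable measurableSet_Ioi))

lemma hcint (hA : LocallyIntegrableOn A (Set.Ici 1))
    (hconv : ∀ σ : ℝ, σ₀ < σ →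
      IntegrableOn (fun x : ℝ => A x * x ^ (-σ)) (Set.Ioi (1 : ℝ)))
    (n : ℕ) {s : ℂ} (hs : σ₀ < s.re) :
    IntegrableOn (fun x : ℝ => (A x : ℂ) * (-(Real.log x : ℂ)) ^ n * (x : ℂ) ^ (-s))
      (Set.Ioi (1:ℝ)) := by
  refine (hlog hA hconv hs n).mono' (aesm_c hA n s) ?_
  filter_upwards [ae_restrict_mem measurableSet_Ioi] with x hx
  rw [norm_integrand hx]

lemma hasDeriv (hA : LocallyIntegrableOn A (Set.Ici 1))
    (hconv : ∀ σ : ℝ, σ₀ < σ →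
      IntegrableOn (fun x : ℝ => A x * x ^ (-σ)) (Set.Ioi (1 : ℝ)))
    (n : ℕ) {s : ℂ} (hs : σ₀ < s.re) :
    HasDerivAt (F A n) (F A (n + 1) s) s := by
  set ε : ℝ := (s.re - σ₀) / 2 with hεdef
  have hε0 : 0 < ε := by rw [hεdef]; linarith
  set σ' : ℝ := σ₀ + ε with hσ'def
  have hσ' : σ₀ < σ' := by rw [hσ'def]; linarith
  have := (hasDerivAt_integral_of_dominated_loc_of_deriv_le (μ := volume.restrict (Set.Ioi 1))
    (F := fun t x => (A x : ℂ) * (-(Real.log x : ℂ)) ^ n * (x : ℂ) ^ (-t))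
    (F' := fun t x => (A x : ℂ) * (-(Real.log x : ℂ)) ^ (n+1) * (x : ℂ) ^ (-t))
    (x₀ := s)
    (bound := fun x => |A x| * (Real.log x) ^ (n+1) * x ^ (-σ'))
    (Metric.ball_mem_nhds s hε0)
    (Eventually.of_forall fun t => aesm_c hA n t)
    (hcint hA hconv n hs)
    (aesm_c hA (n+1) s)
    ?_ (hlog hA hconv hσ' (n+1)) ?_).2
  · exact this
  · -- bound
    filter_upwards [ae_restrict_mem measurableSet_Ioi] with x hx t ht
    have hx1 : (1:ℝ) ≤ x := le_of_lt hx
    rw [norm_integrand hx]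
    have htre : σ' ≤ t.re := by
      have h1 : |t.re - s.re| ≤ dist t s := by
        rw [Complex.dist_eq]
        simpa using Complex.abs_re_le_norm (t - s)
      have h2 : dist t s < ε := Metric.mem_ball.mp ht
      have := abs_le.mp h1
      rw [hσ'def, hεdef]
      have := this.1
      linarith [abs_le.mp (le_trans h1 h2.le) |>.1]
    refine mul_le_mul_of_nonneg_left ?_
      (mul_nonneg (abs_nonneg _) (pow_nonneg (Real.log_nonneg hx1) _))
    exact Real.rpow_le_rpow_of_exponent_le hx1 (by linarith)
  · -- differentiability
    filter_upwards [ae_restrict_mem measurableSet_Ioi] with x hx t _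
    have hx0 : (0:ℝ) < x := lt_trans one_pos hx
    have hc : ((x:ℝ):ℂ) ≠ 0 := by
      simpa using ne_of_gt hx0
    have h1 : HasDerivAt (fun t : ℂ => -t) (-1) t := hasDerivAt_neg t
    have h2 := (h1.const_cpow (c := (x:ℂ)) (Or.inl hc))
    have h3 := h2.const_mul ((A x : ℂ) * (-(Real.log x : ℂ)) ^ n)
    refine h3.congr_deriv ?_
    rw [← Complex.ofReal_log hx0.le]
    ring

/-- iterated derivatives of `F A 0` on the half-plane. -/
lemma hiter (hA : LocallyIntegrableOn A (Set.Ici 1))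
    (hconv : ∀ σ : ℝ, σ₀ < σ →
      IntegrableOn (fun x : ℝ => A x * x ^ (-σ)) (Set.Ioi (1 : ℝ)))
    (n : ℕ) : ∀ {s : ℂ}, σ₀ < s.re → iteratedDeriv n (F A 0) s = F A n s := by
  induction n with
  | zero => intro s _; simp [iteratedDeriv_zero]
  | succ n ih =>
    intro s hs
    rw [iteratedDeriv_succ]
    have hev : iteratedDeriv n (F A 0) =ᶠ[nhds s] F A n := by
      have hopen : IsOpen {t : ℂ | σ₀ < t.re} := isOpen_lt continuous_const Complex.continuous_re
      filter_upwards [hopen.mem_nhds hs] with t ht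
      exact ih ht
    rw [hev.deriv_eq]
    exact (hasDeriv hA hconv n hs).deriv

end LandauAux

open LandauAux

/-- Key lemma: the nonnegative case. -/
lemma landau_key (A : ℝ → ℝ) (σ₀ : ℝ)
    (hA : LocallyIntegrableOn A (Set.Ici (1 : ℝ)))
    (X : ℝ) (hX1 : 1 ≤ X) (hX0 : ∀ x : ℝ, X ≤ x → 0 ≤ A x)
    (hconv : ∀ σ : ℝ, σ₀ < σ →
      IntegrableOn (fun x : ℝ => A x * x ^ (-σ)) (Set.Ioi (1 : ℝ)))
    (hdiv : ∀ σ : ℝ, σ < σ₀ →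
      ¬ IntegrableOn (fun x : ℝ => A x * x ^ (-σ)) (Set.Ioi (1 : ℝ)))
    (r : ℝ) (G : ℂ → ℂ) (hr : 0 < r)
    (hG : DifferentiableOn ℂ G (Metric.ball (σ₀ : ℂ) r))
    (hagree : ∀ s ∈ Metric.ball (σ₀ : ℂ) r, σ₀ < s.re →
      G s = ∫ x in Set.Ioi (1 : ℝ), (A x : ℂ) * (x : ℂ) ^ (-s)) : False := by
  classical
  set a : ℝ := σ₀ + r / 3 with hadef
  have ha : σ₀ < a := by rw [hadef]; linarith
  set σ₁ : ℝ := σ₀ - r / 12 with hσ₁def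
  have hσ₁ : σ₁ < σ₀ := by rw [hσ₁def]; linarith
  set w : ℝ := a - σ₁ with hwdef
  have hw : 0 < w := by rw [hwdef]; linarith
  have hdist : dist ((a : ℝ) : ℂ) ((σ₀ : ℝ) : ℂ) = r / 3 := by
    rw [Complex.dist_eq, ← Complex.ofReal_sub, Complex.norm_real, Real.norm_eq_abs, hadef]
    rw [show σ₀ + r / 3 - σ₀ = r / 3 by ring, abs_of_pos (by linarith)]
  have haball : ((a : ℝ) : ℂ) ∈ Metric.ball ((σ₀ : ℝ) : ℂ) r := by
    rw [Metric.mem_ball, hdist]; linarith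
  have hsub : Metric.ball ((a : ℝ) : ℂ) (2 * r / 3) ⊆ Metric.ball ((σ₀ : ℝ) : ℂ) r := by
    apply Metric.ball_subset_ball'
    rw [hdist]; linarith
  have hσ₁ball : ((σ₁ : ℝ) : ℂ) ∈ Metric.ball ((a : ℝ) : ℂ) (2 * r / 3) := by
    rw [Metric.mem_ball, Complex.dist_eq, ← Complex.ofReal_sub, Complex.norm_real, Real.norm_eq_abs,
      abs_sub_comm, abs_of_nonneg (by rw [hadef, hσ₁def]; linarith)]
    rw [hadef, hσ₁def]; linarith
  -- G agrees with F A 0 near a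
  have hopen : IsOpen (Metric.ball ((σ₀ : ℝ) : ℂ) r ∩ {t : ℂ | σ₀ < t.re}) :=
    Metric.isOpen_ball.inter (isOpen_lt continuous_const Complex.continuous_re)
  have hmem : ((a : ℝ) : ℂ) ∈ Metric.ball ((σ₀ : ℝ) : ℂ) r ∩ {t : ℂ | σ₀ < t.re} :=
    ⟨haball, by simpa using ha⟩
  have hev : G =ᶠ[nhds ((a : ℝ) : ℂ)] F A 0 := by
    filter_upwards [hopen.mem_nhds hmem] with t ht
    rw [hagree t ht.1 ht.2]
    simp [F]
  have hiterG : ∀ n : ℕ, iteratedDeriv n G ((a : ℝ) : ℂ) = F A n ((a : ℝ) : ℂ) := fun n => by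
    rw [Filter.EventuallyEq.iteratedDeriv_eq n hev, hiter hA hconv n (by simpa using ha)]
  have htaylor : HasSum
      (fun n : ℕ => ((n.factorial : ℂ))⁻¹ • (((σ₁ : ℝ) : ℂ) - ((a : ℝ) : ℂ)) ^ n •
        iteratedDeriv n G ((a : ℝ) : ℂ)) (G ((σ₁ : ℝ) : ℂ)) :=
    Complex.hasSum_taylorSeries_on_ball (hG.mono hsub) hσ₁ball
  -- ψ and integrability
  set ψ : ℕ → ℝ → ℝ := fun n x => A x * (Real.log x) ^ n * x ^ (-a) with hψdef
  have h01 : Set.Ioi (1:ℝ) ⊆ Set.Ioi 0 := fun x hx => Set.mem_Ioi.mpr (lt_trans one_pos (Set.mem_Ioi.mp hx))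
  have hψint : ∀ n, IntegrableOn (ψ n) (Set.Ioi 1) := fun n => by
    refine (hlog hA hconv ha n).mono' ?_ ?_
    · exact (((aesm_A hA Set.Ioi_subset_Ici_self).mul
        ((contOn_logpow n h01).aestronglyMeasurable measurableSet_Ioi)).mul
        ((contOn_rpow (-a) h01).aestronglyMeasurable measurableSet_Ioi))
    · filter_upwards [ae_restrict_mem measurableSet_Ioi] with x hx
      have hx0 : (0:ℝ) < x := lt_trans one_pos hx
      rw [hψdef, Real.norm_eq_abs, abs_mul, abs_mul,
        abs_of_nonneg (pow_nonneg (Real.log_nonneg hx.le) n),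
        abs_of_pos (Real.rpow_pos_of_pos hx0 _)]
  set c : ℕ → ℝ := fun n => ∫ x in Set.Ioi (1:ℝ), ψ n x with hcdef
  have hFreal : ∀ n : ℕ, F A n ((a : ℝ) : ℂ) = (((-1 : ℝ) ^ n * c n : ℝ) : ℂ) := fun n => by
    rw [F]
    have hcong : ∀ᵐ x ∂(volume.restrict (Set.Ioi (1:ℝ))),
        (A x : ℂ) * (-(Real.log x : ℂ)) ^ n * (x : ℂ) ^ (-((a : ℝ) : ℂ))
          = (((-1 : ℝ) ^ n * ψ n x : ℝ) : ℂ) := by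
      filter_upwards [ae_restrict_mem measurableSet_Ioi] with x hx
      have hx0 : (0:ℝ) < x := lt_trans one_pos hx
      have hcp : ((x : ℝ) : ℂ) ^ (-((a : ℝ) : ℂ)) = ((x ^ (-a) : ℝ) : ℂ) := by
        rw [Complex.ofReal_cpow hx0.le]
        norm_cast
      rw [hcp, hψdef]
      push_cast
      ring
    have hOR : (∫ x in Set.Ioi (1:ℝ), (((-1:ℝ) ^ n * ψ n x : ℝ) : ℂ))
        = ((∫ x in Set.Ioi (1:ℝ), (-1:ℝ) ^ n * ψ n x : ℝ) : ℂ) := integral_ofReal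
    rw [integral_congr_ae hcong, hOR]
    norm_cast
    simp only [MeasureTheory.integral_const_mul, hcdef]
  -- the real series
  set u : ℕ → ℝ := fun n => (n.factorial : ℝ)⁻¹ * (w ^ n * c n) with hudef
  have hterm : ∀ n : ℕ, ((n.factorial : ℂ))⁻¹ • (((σ₁ : ℝ) : ℂ) - ((a : ℝ) : ℂ)) ^ n •
      iteratedDeriv n G ((a : ℝ) : ℂ) = ((u n : ℝ) : ℂ) := fun n => by
    have hmp : ((σ₁ - a : ℝ)) ^ n * (-1 : ℝ) ^ n = w ^ n := by
      rw [← mul_pow, show ((σ₁ - a) * -1 : ℝ) = w by rw [hwdef]; ring]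
    have hreal : (n.factorial : ℝ)⁻¹ * ((σ₁ - a) ^ n * ((-1 : ℝ) ^ n * c n)) = u n := by
      rw [hudef, show (σ₁ - a : ℝ) ^ n * ((-1 : ℝ) ^ n * c n)
        = ((σ₁ - a : ℝ) ^ n * (-1 : ℝ) ^ n) * c n by ring, hmp]
    rw [hiterG n, hFreal n, smul_eq_mul, smul_eq_mul, ← hreal]
    push_cast
    ring
  have htaylor2 : HasSum (fun n : ℕ => ((u n : ℝ) : ℂ)) (G ((σ₁ : ℝ) : ℂ)) := by
    rw [← funext hterm]
    exact htaylor
  have hu : Summable u := Complex.summable_ofReal.mp htaylor2.summable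
  -- split head and tail
  set L : ℝ := Real.log X with hLdef
  have hL0 : 0 ≤ L := Real.log_nonneg hX1
  set K : ℝ := max 1 (X ^ (-a)) with hKdef
  have hK1 : (0:ℝ) < K := lt_of_lt_of_le one_pos (le_max_left _ _)
  have hrpow_le : ∀ x : ℝ, 1 ≤ x → x ≤ X → x ^ (-a) ≤ K := by
    intro x hx1 hxX
    rcases le_total 0 (-a) with h | h
    · exact le_trans (Real.rpow_le_rpow (by linarith) hxX h) (le_max_right _ _)
    · exact le_trans (Real.rpow_le_one_of_one_le_of_nonpos hx1 h) (le_max_left _ _)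
  have hMint : IntegrableOn (fun x => |A x|) (Set.Ioc 1 X) :=
    MeasureTheory.IntegrableOn.mono_set
      ((hA.integrableOn_compact_subset Set.Icc_subset_Ici_self isCompact_Icc).abs)
      Set.Ioc_subset_Icc_self
  set M : ℝ := ∫ x in Set.Ioc (1:ℝ) X, |A x| with hMdef
  have hM0 : 0 ≤ M := integral_nonneg fun x => abs_nonneg _
  set cH : ℕ → ℝ := fun n => ∫ x in Set.Ioc (1:ℝ) X, ψ n x with hcHdef
  set b : ℕ → ℝ := fun n => ∫ x in Set.Ioi X, ψ n x with hbdef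
  have hIocsub : Set.Ioc (1:ℝ) X ⊆ Set.Ioi 1 := Set.Ioc_subset_Ioi_self
  have hIoisub : Set.Ioi X ⊆ Set.Ioi 1 := Set.Ioi_subset_Ioi hX1
  have hsplit : ∀ n, c n = cH n + b n := fun n => by
    rw [hcdef, hcHdef, hbdef, ← Set.Ioc_union_Ioi_eq_Ioi hX1]
    exact setIntegral_union (Set.Ioc_disjoint_Ioi le_rfl) measurableSet_Ioi
      ((hψint n).mono_set hIocsub) ((hψint n).mono_set hIoisub)
  have hb0 : ∀ n, 0 ≤ b n := fun n => setIntegral_nonneg measurableSet_Ioi fun x hx => by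
    have hx1 : (1:ℝ) ≤ x := le_trans hX1 (le_of_lt hx)
    rw [hψdef]
    exact mul_nonneg (mul_nonneg (hX0 x (le_of_lt hx)) (pow_nonneg (Real.log_nonneg hx1) n))
      (Real.rpow_pos_of_pos (by linarith) _).le
  have hcHbound : ∀ n, |cH n| ≤ M * (L ^ n * K) := by
    intro n
    have hint1 : IntegrableOn (fun x => |ψ n x|) (Set.Ioc 1 X) := ((hψint n).mono_set hIocsub).abs
    have hint2 : IntegrableOn (fun x => |A x| * (L ^ n * K)) (Set.Ioc 1 X) :=
      hMint.mul_const _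
    calc |cH n| ≤ ∫ x in Set.Ioc (1:ℝ) X, |ψ n x| := by
          rw [hcHdef]
          simpa [Real.norm_eq_abs] using
            MeasureTheory.norm_integral_le_integral_norm
              (μ := volume.restrict (Set.Ioc (1:ℝ) X)) (ψ n)
      _ ≤ ∫ x in Set.Ioc (1:ℝ) X, |A x| * (L ^ n * K) := by
          refine integral_mono_ae hint1 hint2 ?_
          filter_upwards [ae_restrict_mem measurableSet_Ioc] with x hx
          have hx1 : (1:ℝ) ≤ x := le_of_lt hx.1
          have hx0 : (0:ℝ) < x := by linarith
          rw [hψdef, abs_mul, abs_mul, abs_of_nonneg (pow_nonneg (Real.log_nonneg hx1) n),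
            abs_of_pos (Real.rpow_pos_of_pos hx0 _)]
          have hlogle : (Real.log x) ^ n ≤ L ^ n :=
            pow_le_pow_left₀ (Real.log_nonneg hx1) (Real.log_le_log hx0 hx.2) n
          calc |A x| * Real.log x ^ n * x ^ (-a)
              ≤ |A x| * (Real.log x ^ n * x ^ (-a)) := le_of_eq (by ring)
            _ ≤ |A x| * (L ^ n * K) := by
                refine mul_le_mul_of_nonneg_left ?_ (abs_nonneg _)
                exact mul_le_mul hlogle (hrpow_le x hx1 hx.2)
                  (Real.rpow_pos_of_pos hx0 _).le (pow_nonneg hL0 n)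
      _ = M * (L ^ n * K) := by rw [hMdef, ← MeasureTheory.integral_mul_const]
  have hSummH : Summable (fun n => (n.factorial : ℝ)⁻¹ * (w ^ n * cH n)) := by
    refine Summable.of_norm_bounded
      ((Real.summable_pow_div_factorial (w * L)).mul_right (M * K)) fun n => ?_
    rw [Real.norm_eq_abs, abs_mul, abs_mul, abs_of_nonneg (by positivity : (0:ℝ) ≤ (n.factorial : ℝ)⁻¹),
      abs_of_nonneg (pow_nonneg hw.le n)]
    calc (n.factorial : ℝ)⁻¹ * (w ^ n * |cH n|)
        ≤ (n.factorial : ℝ)⁻¹ * (w ^ n * (M * (L ^ n * K))) := by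
          refine mul_le_mul_of_nonneg_left ?_ (by positivity)
          exact mul_le_mul_of_nonneg_left (hcHbound n) (pow_nonneg hw.le n)
      _ = (w * L) ^ n / n.factorial * (M * K) := by rw [mul_pow]; ring
  set t : ℕ → ℝ := fun n => (n.factorial : ℝ)⁻¹ * (w ^ n * b n) with htdef
  have ht0 : ∀ n, 0 ≤ t n := fun n => by
    rw [htdef]
    exact mul_nonneg (by positivity) (mul_nonneg (pow_nonneg hw.le n) (hb0 n))
  have hSumt : Summable t := by
    have hdiff := hu.sub hSummH
    refine hdiff.congr fun n => ?_
    simp only [htdef, hudef, hsplit n]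
    ring
  -- tail integrability at σ₁ via Tonelli
  have hIoiX0 : Set.Ioi X ⊆ Set.Ioi (0:ℝ) := fun x hx => Set.mem_Ioi.mpr (lt_of_lt_of_le one_pos (by
    have := hx; simp only [Set.mem_Ioi] at this; linarith))
  have haesmA_X : AEStronglyMeasurable A (volume.restrict (Set.Ioi X)) :=
    aesm_A hA fun x hx => le_trans hX1 (le_of_lt hx)
  set tf : ℕ → ℝ → ℝ := fun n x => ((n.factorial : ℝ)⁻¹ * w ^ n) * ψ n x with htfdef
  have htfint : ∀ n, IntegrableOn (tf n) (Set.Ioi X) := fun n =>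
    ((hψint n).mono_set hIoisub).const_mul _
  have htfnn : ∀ n, ∀ x ∈ Set.Ioi X, 0 ≤ tf n x := by
    intro n x hx
    have hx1 : (1:ℝ) ≤ x := le_trans hX1 (le_of_lt hx)
    rw [htfdef, hψdef]
    exact mul_nonneg (by positivity)
      (mul_nonneg (mul_nonneg (hX0 x (le_of_lt hx)) (pow_nonneg (Real.log_nonneg hx1) n))
        (Real.rpow_pos_of_pos (by linarith) _).le)
  have htfeq : ∀ x ∈ Set.Ioi X, ∀ n, tf n x
      = (A x * x ^ (-a)) * ((w * Real.log x) ^ n / n.factorial) := by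
    intro x _ n
    rw [htfdef, hψdef, mul_pow, div_eq_mul_inv]
    ring
  have htfsummable : ∀ x ∈ Set.Ioi X, Summable (fun n => tf n x) := by
    intro x hx
    refine ((Real.summable_pow_div_factorial (w * Real.log x)).mul_left
      (A x * x ^ (-a))).congr fun n => (htfeq x hx n).symm
  have hptwise : ∀ x ∈ Set.Ioi X, ∑' n, tf n x = A x * x ^ (-σ₁) := by
    intro x hx
    have hx1 : (1:ℝ) ≤ x := le_trans hX1 (le_of_lt hx)
    have hx0 : (0:ℝ) < x := by linarith
    rw [tsum_congr (htfeq x hx), tsum_mul_left]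
    have hexp : ∑' n : ℕ, (w * Real.log x) ^ n / n.factorial = Real.exp (w * Real.log x) := by
      rw [Real.exp_eq_exp_ℝ, NormedSpace.exp_eq_tsum_div]
    rw [hexp, mul_comm w (Real.log x), ← Real.rpow_def_of_pos hx0, mul_assoc,
      ← Real.rpow_add hx0, show -a + w = -σ₁ by rw [hwdef]; ring]
  have hlin : ∫⁻ x in Set.Ioi X, ENNReal.ofReal (A x * x ^ (-σ₁))
      = ∑' n, ∫⁻ x in Set.Ioi X, ENNReal.ofReal (tf n x) := by
    calc ∫⁻ x in Set.Ioi X, ENNReal.ofReal (A x * x ^ (-σ₁))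
        = ∫⁻ x in Set.Ioi X, ∑' n, ENNReal.ofReal (tf n x) := by
          apply lintegral_congr_ae
          filter_upwards [ae_restrict_mem measurableSet_Ioi] with x hx
          rw [← hptwise x hx,
            ENNReal.ofReal_tsum_of_nonneg (fun n => htfnn n x hx) (htfsummable x hx)]
      _ = ∑' n, ∫⁻ x in Set.Ioi X, ENNReal.ofReal (tf n x) :=
          lintegral_tsum fun n => (ENNReal.measurable_ofReal.comp_aemeasurable
            ((htfint n).aestronglyMeasurable.aemeasurable))
  have hlin2 : ∀ n, ∫⁻ x in Set.Ioi X, ENNReal.ofReal (tf n x) = ENNReal.ofReal (t n) := by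
    intro n
    rw [← ofReal_integral_eq_lintegral_ofReal (htfint n) ?_]
    · congr 1
      rw [htfdef, MeasureTheory.integral_const_mul, htdef, hbdef]
      ring
    · filter_upwards [ae_restrict_mem measurableSet_Ioi] with x hx
      exact htfnn n x hx
  have hfin : ∫⁻ x in Set.Ioi X, ENNReal.ofReal (A x * x ^ (-σ₁)) < ⊤ := by
    rw [hlin]
    simp_rw [hlin2]
    rw [← ENNReal.ofReal_tsum_of_nonneg ht0 hSumt]
    exact ENNReal.ofReal_lt_top
  have htail : IntegrableOn (fun x => A x * x ^ (-σ₁)) (Set.Ioi X) := by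
    refine ⟨haesmA_X.mul ((contOn_rpow (-σ₁) hIoiX0).aestronglyMeasurable measurableSet_Ioi), ?_⟩
    rw [hasFiniteIntegral_iff_ofReal ?_]
    · exact hfin
    · filter_upwards [ae_restrict_mem measurableSet_Ioi] with x hx
      have hx1 : (1:ℝ) ≤ x := le_trans hX1 (le_of_lt hx)
      exact mul_nonneg (hX0 x (le_of_lt hx)) (Real.rpow_pos_of_pos (by linarith) _).le
  have hhead : IntegrableOn (fun x => A x * x ^ (-σ₁)) (Set.Ioc 1 X) := by
    have h1 : IntegrableOn A (Set.Icc 1 X) :=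
      hA.integrableOn_compact_subset Set.Icc_subset_Ici_self isCompact_Icc
    have h2 := h1.mul_continuousOn
      (contOn_rpow (-σ₁) (fun x hx => lt_of_lt_of_le one_pos hx.1)) isCompact_Icc
    exact h2.mono_set Set.Ioc_subset_Icc_self
  refine hdiv σ₁ hσ₁ ?_
  rw [← Set.Ioc_union_Ioi_eq_Ioi hX1]
  exact hhead.union htail

/-- **Landau's theorem.** If `A : [1,∞) → ℝ` is locally integrable and eventually of one
sign, and the integral `g(s) = ∫₁^∞ A(x) x^{-s} dx` converges for every real `σ > σ₀` and
diverges for every real `σ < σ₀`, then `g` has a singularity at `s = σ₀`: there is no open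
disc centered at `σ₀` carrying a holomorphic function agreeing with `g` on the part of the
disc lying in the half-plane `{Re s > σ₀}`. -/
theorem landau_theorem (A : ℝ → ℝ) (σ₀ : ℝ)
    (hA : LocallyIntegrableOn A (Set.Ici (1 : ℝ)))
    (hsign : ∃ X : ℝ, 1 ≤ X ∧ ((∀ x : ℝ, X ≤ x → 0 ≤ A x) ∨ (∀ x : ℝ, X ≤ x → A x ≤ 0)))
    (hconv : ∀ σ : ℝ, σ₀ < σ →
      IntegrableOn (fun x : ℝ => A x * x ^ (-σ)) (Set.Ioi (1 : ℝ)))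
    (hdiv : ∀ σ : ℝ, σ < σ₀ →
      ¬ IntegrableOn (fun x : ℝ => A x * x ^ (-σ)) (Set.Ioi (1 : ℝ))) :
    ¬ ∃ (r : ℝ) (G : ℂ → ℂ), 0 < r ∧
        DifferentiableOn ℂ G (Metric.ball (σ₀ : ℂ) r) ∧
        ∀ s ∈ Metric.ball (σ₀ : ℂ) r, σ₀ < s.re →
          G s = ∫ x in Set.Ioi (1 : ℝ), (A x : ℂ) * (x : ℂ) ^ (-s) := by
  rintro ⟨r, G, hr, hG, hagree⟩
  obtain ⟨X, hX1, hpos | hneg⟩ := hsign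
  · exact landau_key A σ₀ hA X hX1 hpos hconv hdiv r G hr hG hagree
  · refine landau_key (fun x => -A x) σ₀ hA.neg X hX1
      (fun x hx => by simpa using hneg x hx)
      (fun σ hσ => by
        have := (hconv σ hσ).neg
        refine this.congr (Eventually.of_forall fun x => by simp only [Pi.neg_apply]; ring))
      (fun σ hσ hint => hdiv σ hσ (by
        have := hint.neg
        refine this.congr (Eventually.of_forall fun x => by simp only [Pi.neg_apply]; ring)))
      r (fun s => -G s) hr hG.neg
      (fun s hs hre => by
        rw [hagree s hs hre, ← integral_neg]
        refine integral_congr_ae (Eventually.of_forall fun x => by push_cast; ring))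
end

section
/- Dirichlet's divisor theorem: ∑_{n≤x} τ(n) = x·log x + (2γ − 1)·x + O(√x) as x → ∞, where τ(n) = #{d ∈ ℕ : d ∣ n} is the number-of-divisors function and γ is the Euler–Mascheroni constant; that is, there exist constants C > 0 and x₀ ≥ 1 such that |∑_{n≤x} τ(n) − x·log x − (2γ−1)x| ≤ C√x for all x ≥ x₀. -/
set_option maxHeartbeats 1000000

open Finset Real

namespace DirichletDivisorAux


lemma card_anti (n : ℕ) : n.divisorsAntidiagonal.card = n.divisors.card := by
  rw [← Nat.map_div_right_divisors, Finset.card_map]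

lemma sum_tau_eq (N : ℕ) :
    ∑ n ∈ Icc 1 N, (Nat.divisors n).card
      = (((Icc 1 N) ×ˢ (Icc 1 N)).filter (fun p => p.1 * p.2 ≤ N)).card := by
  have h : (((Icc 1 N) ×ˢ (Icc 1 N)).filter (fun p => p.1 * p.2 ≤ N))
      = (Icc 1 N).biUnion (fun n => Nat.divisorsAntidiagonal n) := by
    ext p
    simp only [mem_filter, mem_product, mem_Icc, mem_biUnion, Nat.mem_divisorsAntidiagonal]
    constructor
    · rintro ⟨⟨⟨ha1, _⟩, ⟨hb1, _⟩⟩, hab⟩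
      exact ⟨p.1 * p.2, ⟨Nat.one_le_iff_ne_zero.2 (by positivity), hab⟩, rfl, by positivity⟩
    · rintro ⟨n, ⟨hn1, hnN⟩, rfl, hn0⟩
      have h1 : 1 ≤ p.1 := Nat.one_le_iff_ne_zero.2 fun h => hn0 (by simp [h])
      have h2 : 1 ≤ p.2 := Nat.one_le_iff_ne_zero.2 fun h => hn0 (by simp [h])
      exact ⟨⟨⟨h1, le_trans (Nat.le_mul_of_pos_right _ h2) hnN⟩,
        ⟨h2, le_trans (Nat.le_mul_of_pos_left _ h1) hnN⟩⟩, hnN⟩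
  rw [h, Finset.card_biUnion]
  · exact Finset.sum_congr rfl fun n _ => (card_anti n).symm
  · intro a _ b _ hab
    simp only [Finset.disjoint_left]
    intro p hp hp'
    rw [Nat.mem_divisorsAntidiagonal] at hp hp'
    exact hab (hp.1.symm.trans hp'.1)

lemma hyperbola (N : ℕ) :
    (((Icc 1 N) ×ˢ (Icc 1 N)).filter (fun p => p.1 * p.2 ≤ N)).card + N.sqrt * N.sqrt
      = 2 * ∑ a ∈ Icc 1 N.sqrt, N / a := by
  set K := N.sqrt with hK
  set S := (((Icc 1 N) ×ˢ (Icc 1 N)).filter (fun p : ℕ × ℕ => p.1 * p.2 ≤ N)) with hS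
  set A := S.filter (fun p => p.1 ≤ K) with hA
  set B := S.filter (fun p => p.2 ≤ K) with hB
  have hKN : K ≤ N := Nat.sqrt_le_self N
  have hKK : K * K ≤ N := by simpa [pow_two] using Nat.sqrt_le' N
  have hKK' : N < (K + 1) * (K + 1) := by
    simpa [Nat.succ_eq_add_one] using Nat.lt_succ_sqrt N
  have hunion : A ∪ B = S := by
    apply Finset.Subset.antisymm (Finset.union_subset (filter_subset _ _) (filter_subset _ _))
    intro p hp
    rcases le_or_gt p.1 K with h | h
    · exact Finset.mem_union_left _ (mem_filter.2 ⟨hp, h⟩)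
    · refine Finset.mem_union_right _ (mem_filter.2 ⟨hp, ?_⟩)
      by_contra h2
      push_neg at h2
      have hpp := (mem_filter.1 hp).2
      have hge : (K + 1) * (K + 1) ≤ p.1 * p.2 := Nat.mul_le_mul h h2
      omega
  have hinter : A ∩ B = (Icc 1 K) ×ˢ (Icc 1 K) := by
    rw [hA, hB, ← Finset.filter_and]
    ext p
    simp only [mem_filter, hS, mem_product, mem_Icc]
    constructor
    · rintro ⟨⟨⟨⟨ha1, _⟩, ⟨hb1, _⟩⟩, _⟩, h3, h4⟩
      exact ⟨⟨ha1, h3⟩, hb1, h4⟩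
    · rintro ⟨⟨h1, h2⟩, h3, h4⟩
      exact ⟨⟨⟨⟨h1, le_trans h2 hKN⟩, h3, le_trans h4 hKN⟩,
        le_trans (Nat.mul_le_mul h2 h4) hKK⟩, h2, h4⟩
  have hcardA : A.card = ∑ a ∈ Icc 1 K, N / a := by
    rw [hA, Finset.card_eq_sum_card_fiberwise (f := Prod.fst) (t := Icc 1 K)
      (fun p hp => by
        simp only [Finset.mem_coe, mem_filter, hS, mem_product, mem_Icc] at hp
        exact mem_Icc.2 ⟨hp.1.1.1.1, hp.2⟩)]
    refine Finset.sum_congr rfl fun a ha => ?_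
    rw [mem_Icc] at ha
    have key : ((S.filter (fun p => p.1 ≤ K)).filter (fun p => p.1 = a)).card
        = (Icc 1 (N / a)).card := by
      apply Finset.card_nbij' (i := fun p => p.2) (j := fun b => (a, b))
      · intro p hp
        simp only [Finset.mem_coe, mem_filter, hS, mem_product, mem_Icc] at hp
        obtain ⟨⟨⟨⟨_, ⟨hb1, _⟩⟩, hab⟩, _⟩, rfl⟩ := hp
        exact mem_Icc.2 ⟨hb1, (Nat.le_div_iff_mul_le (by omega)).2 (by rwa [mul_comm])⟩
      · intro b hb
        rw [Finset.mem_coe, mem_Icc] at hb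
        have hab : a * b ≤ N := by
          have := (Nat.le_div_iff_mul_le (show 0 < a by omega)).1 hb.2
          rwa [mul_comm] at this
        have hbN : b ≤ N := le_trans (Nat.le_mul_of_pos_left _ (by omega)) hab
        have haN : a ≤ N := le_trans ha.2 hKN
        simp only [Finset.mem_coe, mem_filter, hS, mem_product, mem_Icc]
        exact ⟨⟨⟨⟨⟨ha.1, haN⟩, ⟨hb.1, hbN⟩⟩, hab⟩, ha.2⟩, trivial⟩
      · intro p hp
        simp only [Finset.mem_coe, mem_filter] at hp
        rw [← hp.2]
      · intro b _
        rfl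
    rw [key, Nat.card_Icc, Nat.add_sub_cancel]
  have hcardB : B.card = A.card := by
    have hBA : B = A.map (Equiv.prodComm ℕ ℕ).toEmbedding := by
      ext p
      simp only [hA, hB, Finset.mem_map, mem_filter, hS, mem_product, mem_Icc,
        Equiv.coe_toEmbedding, Equiv.prodComm_apply]
      constructor
      · rintro ⟨⟨⟨h1, h2⟩, h3⟩, h4⟩
        exact ⟨(p.2, p.1), ⟨⟨⟨h2, h1⟩, by rwa [mul_comm]⟩, h4⟩, rfl⟩
      · rintro ⟨q, ⟨⟨⟨h1, h2⟩, h3⟩, h4⟩, rfl⟩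
        exact ⟨⟨⟨h2, h1⟩, by rwa [mul_comm]⟩, h4⟩
    rw [hBA, Finset.card_map]
  have hmain := Finset.card_union_add_card_inter A B
  rw [hunion, hinter, hcardB, hcardA] at hmain
  rw [Finset.card_product, Nat.card_Icc] at hmain
  simp only [Nat.add_sub_cancel] at hmain
  omega

lemma gamma_bound {K : ℕ} (hK : 1 ≤ K) :
    |(harmonic K : ℝ) - Real.log K - Real.eulerMascheroniConstant| ≤ 1 / K := by
  have h1 := Real.eulerMascheroniSeq_lt_eulerMascheroniConstant K
  have h2 := Real.eulerMascheroniConstant_lt_eulerMascheroniSeq' K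
  rw [Real.eulerMascheroniSeq] at h1
  rw [Real.eulerMascheroniSeq', if_neg (by omega)] at h2
  have hKpos : (0:ℝ) < K := by exact_mod_cast hK
  have hlog : Real.log (K + 1) - Real.log K ≤ 1 / K := by
    rw [← Real.log_div (by positivity) (by positivity)]
    have := Real.log_le_sub_one_of_pos (show (0:ℝ) < (K+1)/K by positivity)
    calc Real.log ((K+1)/K) ≤ (K+1)/K - 1 := this
      _ = 1 / K := by field_simp; ring
  rw [abs_le]
  constructor <;> nlinarith

lemma div_sum_bound (N K : ℕ) :
    |(∑ a ∈ Icc 1 K, ((N / a : ℕ) : ℝ)) - N * (harmonic K : ℝ)| ≤ K := by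
  have hh : (harmonic K : ℝ) = ∑ a ∈ Icc 1 K, (a : ℝ)⁻¹ := by
    rw [harmonic_eq_sum_Icc]; push_cast; rfl
  rw [hh, Finset.mul_sum, ← Finset.sum_sub_distrib]
  calc |∑ a ∈ Icc 1 K, (((N / a : ℕ) : ℝ) - N * (a:ℝ)⁻¹)|
      ≤ ∑ a ∈ Icc 1 K, |((N / a : ℕ) : ℝ) - N * (a:ℝ)⁻¹| := Finset.abs_sum_le_sum_abs _ _
    _ ≤ ∑ a ∈ Icc 1 K, 1 := by
        refine Finset.sum_le_sum fun a ha => ?_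
        rw [mem_Icc] at ha
        have ha0 : (0:ℝ) < a := by exact_mod_cast ha.1
        have h1 : ((N / a : ℕ) : ℝ) ≤ N / a := by
          rw [le_div_iff₀ ha0]
          exact_mod_cast Nat.div_mul_le_self N a
        have h2' : N < (N / a + 1) * a := by
          calc N = a * (N / a) + N % a := (Nat.div_add_mod N a).symm
            _ < a * (N / a) + a := by
                have := Nat.mod_lt N (show 0 < a by omega); omega
            _ = (N / a + 1) * a := by ring
        have h2 : (N:ℝ) / a < (N / a : ℕ) + 1 := by
          rw [div_lt_iff₀ ha0]
          exact_mod_cast h2'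
        have hinv : (N:ℝ) * (a:ℝ)⁻¹ = (N:ℝ) / a := (div_eq_mul_inv (N:ℝ) (a:ℝ)).symm
        rw [hinv, abs_le]
        constructor <;> linarith
    _ = K := by simp

theorem main_est (x : ℝ) (hx : (16:ℝ) ≤ x)
    (N K : ℕ) (hN : N = ⌊x⌋₊) (hKdef : K = N.sqrt)
    (hDr : (∑ n ∈ Finset.Icc 1 N, ((n.divisors.card : ℕ) : ℝ))
      = 2 * (∑ a ∈ Icc 1 K, ((N / a : ℕ) : ℝ)) - K * K)
    (B1 : |(∑ a ∈ Icc 1 K, ((N / a : ℕ) : ℝ)) - N * (harmonic K : ℝ)| ≤ K)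
    (B2 : |(harmonic K : ℝ) - Real.log K - Real.eulerMascheroniConstant| ≤ 1 / K) :
    |(∑ n ∈ Finset.Icc 1 N, ((n.divisors.card : ℕ) : ℝ)) -
        x * Real.log x - (2 * Real.eulerMascheroniConstant - 1) * x| ≤ 20 * Real.sqrt x := by
  set γ := Real.eulerMascheroniConstant with hγ
  set s := Real.sqrt x with hs
  set H := (harmonic K : ℝ)
  set T := (∑ a ∈ Icc 1 K, ((N / a : ℕ) : ℝ)) with hT
  have hx0 : (0:ℝ) < x := by linarith
  have hNx : (N:ℝ) ≤ x := hN ▸ Nat.floor_le hx0.le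
  have hxN : x < N + 1 := hN ▸ Nat.lt_floor_add_one x
  have hN16 : 16 ≤ N := hN ▸ Nat.le_floor (by exact_mod_cast hx)
  have hK4 : 4 ≤ K := by
    rw [hKdef]
    exact Nat.le_sqrt.2 (by omega)
  have hKK : K * K ≤ N := by
    have h := Nat.sqrt_le' N
    rw [pow_two] at h
    exact hKdef ▸ h
  have hKK' : N < (K + 1) * (K + 1) := by
    have := Nat.lt_succ_sqrt N
    simpa [hKdef, Nat.succ_eq_add_one] using this
  have hs4 : (4:ℝ) ≤ s := by
    rw [hs, show (4:ℝ) = Real.sqrt 16 by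
      rw [show (16:ℝ) = 4^2 by norm_num, Real.sqrt_sq (by norm_num)]]
    exact Real.sqrt_le_sqrt hx
  have hss : s * s = x := Real.mul_self_sqrt hx0.le
  have hKs : (K:ℝ) ≤ s := by
    rw [hs, Real.le_sqrt (by positivity) hx0.le]
    have : ((K*K : ℕ):ℝ) ≤ (N:ℝ) := by exact_mod_cast hKK
    push_cast at this
    nlinarith
  have hsK : s ≤ K + 1 := by
    have h : (N:ℝ) + 1 ≤ ((K:ℝ)+1) * ((K:ℝ)+1) := by exact_mod_cast hKK'
    rw [hs, show (K:ℝ) + 1 = ((K+1 : ℕ):ℝ) by push_cast; ring,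
      Real.sqrt_le_left (by positivity)]
    push_cast
    nlinarith
  have hKpos : (0:ℝ) < K := by positivity
  have hx2K : 2 * x ≤ 4 * s * K := by nlinarith
  -- log bounds
  have hK1 : (1:ℝ) ≤ K := by exact_mod_cast (show 1 ≤ K by omega)
  have hlogK0 : 0 ≤ Real.log K := Real.log_nonneg hK1
  have hlogKs : Real.log K ≤ Real.log s := Real.log_le_log hKpos hKs
  have hlogs : Real.log s ≤ s := by
    have := Real.log_le_sub_one_of_pos (show (0:ℝ) < s by linarith)
    linarith
  have hlogdiff : Real.log s - Real.log K ≤ 1 / K := by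
    rw [← Real.log_div (by linarith) (by positivity)]
    have h1 := Real.log_le_sub_one_of_pos (show (0:ℝ) < s / K by positivity)
    have h2 : s / K ≤ ((K:ℝ) + 1) / K := by gcongr
    have h3 : ((K:ℝ) + 1) / K - 1 = 1 / K := by field_simp; ring
    linarith
  have hlogx : Real.log x = 2 * Real.log s := by
    rw [hs, Real.log_sqrt hx0.le]; ring
  have hγ2 : γ < 2/3 := Real.eulerMascheroniConstant_lt_two_thirds
  have hγ0 : 0 < γ := lt_trans (by norm_num) Real.one_half_lt_eulerMascheroniConstant
  -- decomposition
  have key : (∑ n ∈ Finset.Icc 1 N, ((n.divisors.card : ℕ) : ℝ)) -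
        x * Real.log x - (2 * γ - 1) * x
      = 2 * (T - N * H) + 2 * N * (H - Real.log K - γ)
        + (2 * N * Real.log K - x * Real.log x) + 2 * γ * ((N:ℝ) - x) + (x - (K:ℝ) * K) := by
    rw [hDr]; ring
  rw [key]
  have b1 : |2 * (T - N * H)| ≤ 2 * s := by
    rw [abs_mul, abs_two]
    nlinarith
  have b2 : |2 * (N:ℝ) * (H - Real.log K - γ)| ≤ 4 * s := by
    rw [abs_mul, abs_of_nonneg (show (0:ℝ) ≤ 2 * (N:ℝ) by positivity)]
    have hNK : 2 * (N:ℝ) * (1/K) ≤ 4 * s := by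
      rw [mul_one_div, div_le_iff₀ hKpos]
      linarith
    calc 2 * (N:ℝ) * |H - Real.log K - γ| ≤ 2 * (N:ℝ) * (1/K) :=
          mul_le_mul_of_nonneg_left B2 (by positivity)
      _ ≤ 4 * s := hNK
  have b3 : |2 * (N:ℝ) * Real.log K - x * Real.log x| ≤ 6 * s := by
    have hdecomp : 2 * (N:ℝ) * Real.log K - x * Real.log x
        = 2 * ((N:ℝ) - x) * Real.log K + 2 * x * (Real.log K - Real.log s) := by
      rw [hlogx]; ring
    rw [hdecomp]
    have e1 : |2 * ((N:ℝ) - x) * Real.log K| ≤ 2 * s := by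
      rw [abs_mul, abs_of_nonneg hlogK0, abs_mul, abs_two]
      have : |(N:ℝ) - x| ≤ 1 := by rw [abs_le]; constructor <;> linarith
      nlinarith
    have e2 : |2 * x * (Real.log K - Real.log s)| ≤ 4 * s := by
      rw [abs_mul]
      have h2x : |2 * x| = 2 * x := abs_of_nonneg (by linarith)
      rw [h2x, abs_sub_comm, abs_of_nonneg (by linarith)]
      calc 2 * x * (Real.log s - Real.log K) ≤ 2 * x * (1/K) := by
            apply mul_le_mul_of_nonneg_left hlogdiff (by linarith)
        _ ≤ 4 * s := by
            rw [mul_one_div, div_le_iff₀ hKpos]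
            nlinarith
    calc |2 * ((N:ℝ) - x) * Real.log K + 2 * x * (Real.log K - Real.log s)|
        ≤ |2 * ((N:ℝ) - x) * Real.log K| + |2 * x * (Real.log K - Real.log s)| := abs_add_le _ _
      _ ≤ 6 * s := by linarith
  have b4 : |2 * γ * ((N:ℝ) - x)| ≤ s := by
    rw [abs_mul]
    have h1 : |2 * γ| = 2 * γ := abs_of_nonneg (by linarith)
    have h2 : |(N:ℝ) - x| ≤ 1 := by rw [abs_le]; constructor <;> linarith
    rw [h1]
    nlinarith
  have b5 : |x - (K:ℝ) * K| ≤ 3 * s := by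
    have h1 : (K:ℝ) * K ≤ x := by
      have : ((K*K : ℕ):ℝ) ≤ (N:ℝ) := by exact_mod_cast hKK
      push_cast at this; linarith
    have h2 : x - (K:ℝ)*K ≤ 2*K + 1 := by
      have : (N:ℝ) + 1 ≤ ((K:ℝ)+1)*((K:ℝ)+1) := by exact_mod_cast hKK'
      nlinarith
    rw [abs_of_nonneg (by linarith)]
    nlinarith
  calc |2 * (T - N * H) + 2 * N * (H - Real.log K - γ)
        + (2 * N * Real.log K - x * Real.log x) + 2 * γ * ((N:ℝ) - x) + (x - (K:ℝ) * K)|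
      ≤ |2 * (T - N * H)| + |2 * (N:ℝ) * (H - Real.log K - γ)|
        + |2 * (N:ℝ) * Real.log K - x * Real.log x| + |2 * γ * ((N:ℝ) - x)|
        + |x - (K:ℝ) * K| := by
        apply (abs_add_le _ _).trans
        gcongr
        apply (abs_add_le _ _).trans
        gcongr
        apply (abs_add_le _ _).trans
        gcongr
        exact abs_add_le _ _
    _ ≤ 20 * s := by linarith

end DirichletDivisorAux

/-- **Dirichlet's divisor theorem**: `∑_{n ≤ x} τ(n) = x log x + (2γ - 1) x + O(√x)`,
where `τ` is the number-of-divisors function and `γ` is the Euler–Mascheroni constant. -/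
theorem dirichlet_divisor_theorem :
    ∃ C : ℝ, 0 < C ∧ ∃ x₀ : ℝ, 1 ≤ x₀ ∧ ∀ x : ℝ, x₀ ≤ x →
      |(∑ n ∈ Finset.Icc 1 ⌊x⌋₊, (n.divisors.card : ℝ)) -
          x * Real.log x - (2 * Real.eulerMascheroniConstant - 1) * x| ≤
        C * Real.sqrt x := by
  refine ⟨20, by norm_num, 16, by norm_num, fun x hx => ?_⟩
  set N := ⌊x⌋₊ with hN
  set K := N.sqrt with hKdef
  have hnat : (∑ n ∈ Finset.Icc 1 N, (Nat.divisors n).card) + K * K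
      = 2 * ∑ a ∈ Finset.Icc 1 K, N / a :=
    (DirichletDivisorAux.sum_tau_eq N ▸ (DirichletDivisorAux.hyperbola N))
  have hDr : (∑ n ∈ Finset.Icc 1 N, ((n.divisors.card : ℕ) : ℝ))
      = 2 * (∑ a ∈ Finset.Icc 1 K, ((N / a : ℕ) : ℝ)) - (K:ℝ) * K := by
    have h := congrArg (fun m : ℕ => (m : ℝ)) hnat
    push_cast at h
    linarith
  have hK1 : 1 ≤ K := by
    rw [hKdef]
    refine Nat.le_sqrt.2 ?_
    have : (16:ℕ) ≤ N := Nat.le_floor (by exact_mod_cast hx)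
    omega
  have := DirichletDivisorAux.main_est x hx N K hN hKdef hDr
    (DirichletDivisorAux.div_sum_bound N K) (DirichletDivisorAux.gamma_bound hK1)
  simpa using this
end

section
/- Turán's first main theorem of the power-sum method: there exists an absolute constant A > 0 with the following property. Let n ≥ 1, let z₁, …, z_n be pairwise distinct complex numbers with |z_j| ≥ 1 for every j, let b₁, …, b_n be complex numbers, and write s_v = ∑_{j=1}^n b_j z_j^v. Then for every nonnegative integer m there exists an integer v with m+1 ≤ v ≤ m+n such that |s_v| ≥ (n/(A(m+n)))^n · |s₀|, where s₀ = ∑_{j=1}^n b_j. -/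
open Polynomial Finset Nat

namespace TuranAux


lemma prod_monic (l : List ℂ) :
    ((l.map fun w => X - C w).prod).Monic ∧
      ((l.map fun w => X - C w).prod).natDegree = l.length := by
  induction l with
  | nil => simp [Polynomial.monic_one]
  | cons w l ih =>
    simp only [List.map_cons, List.prod_cons, List.length_cons]
    refine ⟨(monic_X_sub_C w).mul ih.1, ?_⟩
    rw [(monic_X_sub_C w).natDegree_mul ih.1, natDegree_X_sub_C, ih.2]
    omega

lemma prod_coeff_bound (l : List ℂ) (hl : ∀ w ∈ l, ‖w‖ ≤ 1) (i : ℕ) :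
    ‖((l.map fun w => X - C w).prod).coeff i‖ ≤ (l.length).choose i := by
  induction l generalizing i with
  | nil =>
    rcases eq_or_ne i 0 with rfl | h
    · simp
    · simp [coeff_one, h]
  | cons w l ih =>
    have hw : ‖w‖ ≤ 1 := hl w (by simp)
    have hl' : ∀ u ∈ l, ‖u‖ ≤ 1 := fun u hu => hl u (by simp [hu])
    simp only [List.map_cons, List.prod_cons, List.length_cons]
    obtain ⟨P, hP, ihP⟩ : ∃ P : ℂ[X], (l.map fun w => X - C w).prod = P ∧
        ∀ i, ‖P.coeff i‖ ≤ (l.length.choose i : ℝ) :=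
      ⟨_, rfl, fun i => ih hl' i⟩
    rw [hP]
    have hexp : ∀ i, ((X - C w) * P).coeff i = (X * P).coeff i - w * P.coeff i := by
      intro i; rw [sub_mul, coeff_sub, coeff_C_mul]
    have hmul : ∀ i, ‖w * P.coeff i‖ ≤ (l.length.choose i : ℝ) := by
      intro i
      rw [norm_mul]
      calc ‖w‖ * ‖P.coeff i‖ ≤ 1 * (l.length.choose i : ℝ) :=
            mul_le_mul hw (ihP i) (norm_nonneg _) zero_le_one
        _ = _ := one_mul _
    cases i with
    | zero =>
      rw [hexp, coeff_X_mul_zero, zero_sub, norm_neg]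
      simpa using hmul 0
    | succ k =>
      rw [hexp, coeff_X_mul]
      calc ‖P.coeff k - w * P.coeff (k+1)‖
          ≤ ‖P.coeff k‖ + ‖w * P.coeff (k+1)‖ := norm_sub_le _ _
        _ ≤ (l.length.choose k : ℝ) + l.length.choose (k+1) :=
            add_le_add (ihP k) (hmul (k+1))
        _ = ((l.length + 1).choose (k+1) : ℝ) := by
            rw [Nat.choose_succ_succ l.length k]; push_cast; ring



lemma sum_choose_reindex (N n' a : ℕ) (h1 : 1 ≤ n') (h2 : n' ≤ N) (ha : a ≤ N - n') :
    ∑ i ∈ Icc a (N - n'), ((N - 1 - i).choose (n' - 1) : ℝ)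
      = ((N - a).choose n' : ℝ) := by
  have key : ∑ i ∈ Icc a (N - n'), (N - 1 - i).choose (n' - 1)
      = (N - a).choose n' := by
    have := Nat.sum_Icc_choose (N - 1 - a) (n' - 1)
    rw [show N - 1 - a + 1 = N - a by omega, show n' - 1 + 1 = n' by omega] at this
    rw [← this]
    refine Finset.sum_nbij' (fun i => N - 1 - i) (fun s => N - 1 - s) ?_ ?_ ?_ ?_ ?_
    · intro i hi; simp only [mem_Icc] at *; omega
    · intro s hs; simp only [mem_Icc] at *; omega
    · intro i hi; simp only [mem_Icc] at *; omega
    · intro s hs; simp only [mem_Icc] at *; omega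
    · intro i hi; rfl
  rw [← key]; push_cast; rfl



lemma key (N : ℕ) (l : List ℂ) (h1 : 1 ≤ l.length) (hlen : l.length ≤ N)
    (hl : ∀ w ∈ l, ‖w‖ ≤ 1) :
    ∃ Q R : ℂ[X], (X : ℂ[X])^N = Q * (l.map fun w => X - C w).prod + R ∧
      Q.natDegree ≤ N - l.length ∧
      (∀ j, ‖Q.coeff j‖ ≤ ((N - 1 - j).choose (l.length - 1) : ℝ)) ∧
      R.natDegree < l.length ∧
      ∑ i ∈ range l.length, ‖R.coeff i‖ ≤ ∑ k ∈ range l.length, 2^k * (N.choose k : ℝ) := by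
  induction l with
  | nil => simp at h1
  | cons w l' ih =>
    have hw : ‖w‖ ≤ 1 := hl w (by simp)
    have hl'' : ∀ u ∈ l', ‖u‖ ≤ 1 := fun u hu => hl u (by simp [hu])
    by_cases hnil : l' = []
    · -- base case : single root w
      subst hnil
      have hN : 1 ≤ N := by simpa using hlen
      refine ⟨∑ i ∈ range N, C (w^(N-1-i)) * X^i, C (w^N), ?_, ?_, ?_, ?_, ?_⟩
      · have hg := geom_sum₂_mul (X : ℂ[X]) (C w) N
        have hg' : (∑ i ∈ range N, C (w^(N-1-i)) * X^i) * (X - C w)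
            = X^N - C (w^N) := by
          have hsum : ∑ i ∈ range N, C (w^(N-1-i)) * X^i
              = ∑ i ∈ range N, (X : ℂ[X])^i * (C w)^(N-1-i) :=
            Finset.sum_congr rfl fun i _ => by rw [C_pow, mul_comm]
          rw [hsum, hg, C_pow]
        simp only [List.map_cons, List.map_nil, List.prod_cons, List.prod_nil, mul_one]
        linear_combination -hg'
      · simp only [List.length_cons, List.length_nil]
        refine natDegree_sum_le_of_forall_le _ _ fun i hi => ?_
        refine (natDegree_C_mul_le _ _).trans ?_
        rw [natDegree_X_pow]
        simp only [mem_range] at hi; omega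
      · intro j
        have hc : (∑ i ∈ range N, C (w^(N-1-i)) * X^i).coeff j
            = if j ∈ range N then w^(N-1-j) else 0 := by
          rw [finset_sum_coeff]
          simp only [coeff_C_mul, coeff_X_pow, mul_ite, mul_one, mul_zero]
          exact Finset.sum_ite_eq _ _ _
        rw [hc]
        simp only [List.length_cons, List.length_nil, Nat.add_sub_cancel]
        have : ((N - 1 - j).choose 0 : ℝ) = 1 := by simp
        rw [this]
        split
        · calc ‖w^(N-1-j)‖ = ‖w‖^(N-1-j) := norm_pow _ _
            _ ≤ 1 := pow_le_one₀ (norm_nonneg _) hw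
        · simp
      · simp only [List.length_cons, List.length_nil, natDegree_C]; omega
      · simp only [List.length_cons, List.length_nil, zero_add, range_one, sum_singleton,
          coeff_C_zero, pow_zero, one_mul, Nat.choose_zero_right, Nat.cast_one]
        calc ‖w^N‖ = ‖w‖^N := norm_pow _ _
          _ ≤ 1 := pow_le_one₀ (norm_nonneg _) hw
    · -- inductive step
      have h1' : 1 ≤ l'.length := List.length_pos_iff.mpr hnil
      have hlen' : l'.length ≤ N := by simp only [List.length_cons] at hlen; omega
      obtain ⟨Q', R', hid, hQd, hQc, hRd, hRs⟩ := ih h1' hlen' hl''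
      set n' := l'.length with hn'
      have hlenc : (w :: l').length = n' + 1 := by simp [hn']
      have hlN : n' + 1 ≤ N := by simpa [hlenc] using hlen
      obtain ⟨hPm, hPd⟩ := prod_monic l'
      set P' := (l'.map fun u => X - C u).prod with hP'
      set t := Q'.eval w with htdef
      set Q := Q' /ₘ (X - C w) with hQdef
      have hdiv : Q' = (X - C w) * Q + C t := by
        conv_lhs => rw [← modByMonic_add_div Q' (X - C w)]
        rw [modByMonic_X_sub_C_eq_C_eval]
        rw [← hQdef, ← htdef]; ring
      have hQd2 : Q.natDegree ≤ N - (n' + 1) := by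
        rw [hQdef, natDegree_divByMonic Q' (monic_X_sub_C w), natDegree_X_sub_C]
        omega
      -- bound on t
      have ht : ‖t‖ ≤ (N.choose n' : ℝ) := by
        have hev : t = ∑ j ∈ range (N - n' + 1), Q'.coeff j * w^j := by
          rw [htdef]
          exact eval_eq_sum_range' (by omega) w
        rw [hev]
        calc ‖∑ j ∈ range (N - n' + 1), Q'.coeff j * w^j‖
            ≤ ∑ j ∈ range (N - n' + 1), ‖Q'.coeff j * w^j‖ := norm_sum_le _ _
          _ ≤ ∑ j ∈ range (N - n' + 1), ((N - 1 - j).choose (n' - 1) : ℝ) := by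
              refine Finset.sum_le_sum fun j _ => ?_
              rw [norm_mul, norm_pow]
              calc ‖Q'.coeff j‖ * ‖w‖^j
                  ≤ ((N - 1 - j).choose (n' - 1) : ℝ) * 1 := by
                    refine mul_le_mul ?_ (pow_le_one₀ (norm_nonneg _) hw)
                      (pow_nonneg (norm_nonneg _) j) (Nat.cast_nonneg _)
                    simpa using hQc j
                _ = _ := mul_one _
          _ = ((N - 0).choose n' : ℝ) := by
              rw [← sum_choose_reindex N n' 0 h1' hlen' (Nat.zero_le _)]
              congr 1
              rw [range_eq_Ico, Finset.Ico_add_one_right_eq_Icc]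
          _ = (N.choose n' : ℝ) := by norm_num
      refine ⟨Q, C t * P' + R', ?_, ?_, ?_, ?_, ?_⟩
      · simp only [List.map_cons, List.prod_cons, ← hP']
        linear_combination hid + P' * hdiv
      · rw [hlenc]; exact hQd2
      · intro j
        rw [hlenc]
        simp only [Nat.add_sub_cancel]
        by_cases hj : N - n' ≤ j + 1
        · rcases Nat.lt_or_ge j (N - n') with hj2 | hj2
          · -- j + 1 = N - n' exactly or j < N - n' with N - n' ≤ j + 1 : j = N - n' - 1
            -- still need the sum computation; fall through to general argument below
            rw [hQdef, coeff_divByMonic_X_sub_C]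
            calc ‖∑ i ∈ Icc (j+1) Q'.natDegree, w^(i-(j+1)) * Q'.coeff i‖
                ≤ ∑ i ∈ Icc (j+1) Q'.natDegree, ‖w^(i-(j+1)) * Q'.coeff i‖ :=
                  norm_sum_le _ _
              _ ≤ ∑ i ∈ Icc (j+1) Q'.natDegree, ((N - 1 - i).choose (n' - 1) : ℝ) := by
                  refine Finset.sum_le_sum fun i _ => ?_
                  rw [norm_mul, norm_pow]
                  calc ‖w‖^(i-(j+1)) * ‖Q'.coeff i‖
                      ≤ 1 * ((N - 1 - i).choose (n' - 1) : ℝ) := by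
                        refine mul_le_mul (pow_le_one₀ (norm_nonneg _) hw) ?_
                          (norm_nonneg _) zero_le_one
                        simpa using hQc i
                    _ = _ := one_mul _
              _ ≤ ∑ i ∈ Icc (j+1) (N - n'), ((N - 1 - i).choose (n' - 1) : ℝ) := by
                  refine Finset.sum_le_sum_of_subset_of_nonneg ?_
                    (fun _ _ _ => Nat.cast_nonneg _)
                  exact Finset.Icc_subset_Icc le_rfl hQd
              _ = ((N - (j+1)).choose n' : ℝ) := sum_choose_reindex N n' (j+1) h1' hlen' (by omega)
              _ = ((N - 1 - j).choose n' : ℝ) := by rw [show N - (j+1) = N - 1 - j by omega]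
          · -- j ≥ N - n' : coefficient is zero
            have : Q.coeff j = 0 := coeff_eq_zero_of_natDegree_lt (by omega)
            rw [this, norm_zero]
            exact Nat.cast_nonneg _
        · push_neg at hj
          rw [hQdef, coeff_divByMonic_X_sub_C]
          calc ‖∑ i ∈ Icc (j+1) Q'.natDegree, w^(i-(j+1)) * Q'.coeff i‖
              ≤ ∑ i ∈ Icc (j+1) Q'.natDegree, ‖w^(i-(j+1)) * Q'.coeff i‖ :=
                norm_sum_le _ _
            _ ≤ ∑ i ∈ Icc (j+1) Q'.natDegree, ((N - 1 - i).choose (n' - 1) : ℝ) := by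
                refine Finset.sum_le_sum fun i _ => ?_
                rw [norm_mul, norm_pow]
                calc ‖w‖^(i-(j+1)) * ‖Q'.coeff i‖
                    ≤ 1 * ((N - 1 - i).choose (n' - 1) : ℝ) := by
                      refine mul_le_mul (pow_le_one₀ (norm_nonneg _) hw) ?_
                        (norm_nonneg _) zero_le_one
                      simpa using hQc i
                  _ = _ := one_mul _
            _ ≤ ∑ i ∈ Icc (j+1) (N - n'), ((N - 1 - i).choose (n' - 1) : ℝ) := by
                refine Finset.sum_le_sum_of_subset_of_nonneg ?_
                  (fun _ _ _ => Nat.cast_nonneg _)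
                exact Finset.Icc_subset_Icc le_rfl hQd
            _ = ((N - (j+1)).choose n' : ℝ) := sum_choose_reindex N n' (j+1) h1' hlen' (by omega)
            _ = ((N - 1 - j).choose n' : ℝ) := by rw [show N - (j+1) = N - 1 - j by omega]
      · rw [hlenc]
        calc (C t * P' + R').natDegree ≤ max (C t * P').natDegree R'.natDegree :=
            natDegree_add_le _ _
          _ < n' + 1 := by
            have h1 : (C t * P').natDegree ≤ n' := by
              refine (natDegree_C_mul_le _ _).trans ?_
              rw [hPd]
            omega
      · rw [hlenc]
        have hsplit : ∀ i, ‖(C t * P' + R').coeff i‖ ≤ ‖t‖ * ‖P'.coeff i‖ + ‖R'.coeff i‖ := by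
          intro i
          rw [coeff_add, coeff_C_mul]
          exact (norm_add_le _ _).trans (by rw [norm_mul])
        calc ∑ i ∈ range (n'+1), ‖(C t * P' + R').coeff i‖
            ≤ ∑ i ∈ range (n'+1), (‖t‖ * ‖P'.coeff i‖ + ‖R'.coeff i‖) :=
              Finset.sum_le_sum fun i _ => hsplit i
          _ = ‖t‖ * ∑ i ∈ range (n'+1), ‖P'.coeff i‖ + ∑ i ∈ range (n'+1), ‖R'.coeff i‖ := by
              rw [Finset.sum_add_distrib, Finset.mul_sum]
          _ ≤ (N.choose n' : ℝ) * 2^n' + ∑ k ∈ range n', 2^k * (N.choose k : ℝ) := by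
              gcongr ?_ + ?_
              · have hp : ∑ i ∈ range (n'+1), ‖P'.coeff i‖ ≤ (2^n' : ℝ) := by
                  calc ∑ i ∈ range (n'+1), ‖P'.coeff i‖
                      ≤ ∑ i ∈ range (n'+1), (n'.choose i : ℝ) :=
                        Finset.sum_le_sum fun i _ => by
                          simpa [hPd] using prod_coeff_bound l' hl'' i
                    _ = ((∑ i ∈ range (n'+1), n'.choose i : ℕ) : ℝ) := by push_cast; rfl
                    _ = (2^n' : ℝ) := by rw [Nat.sum_range_choose]; push_cast; rfl
                exact mul_le_mul ht hp (Finset.sum_nonneg fun _ _ => norm_nonneg _)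
                  (Nat.cast_nonneg _)
              · calc ∑ i ∈ range (n'+1), ‖R'.coeff i‖
                    = ∑ i ∈ range n', ‖R'.coeff i‖ + ‖R'.coeff n'‖ := Finset.sum_range_succ _ _
                  _ = ∑ i ∈ range n', ‖R'.coeff i‖ := by
                      rw [coeff_eq_zero_of_natDegree_lt hRd, norm_zero, add_zero]
                  _ ≤ _ := hRs
          _ = ∑ k ∈ range (n'+1), 2^k * (N.choose k : ℝ) := by
              rw [Finset.sum_range_succ]; ring



lemma fact_le_pow_mul (k c : ℕ) : ∀ d, k + d ≤ c → (k + d) ! ≤ k ! * c ^ d := by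
  intro d
  induction d with
  | zero => simp
  | succ d ih =>
    intro h
    have h' : k + d ≤ c := by omega
    calc (k + (d+1)) ! = (k + d + 1) * (k + d) ! := by rw [show k+(d+1) = (k+d)+1 by omega]; rfl
      _ ≤ c * (k ! * c ^ d) := Nat.mul_le_mul (by omega) (ih h')
      _ = k ! * c ^ (d+1) := by ring

lemma succ_pow_le_three_mul (n : ℕ) : (n+1)^n ≤ 3 * n^n := by
  rcases Nat.eq_zero_or_pos n with rfl | hn
  · simp
  have hR : ((n+1 : ℕ) : ℝ)^n ≤ 3 * ((n : ℕ) : ℝ)^n := by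
    have hnR : (0:ℝ) < n := by exact_mod_cast hn
    have h1 : ((n:ℝ)+1)^n = (n:ℝ)^n * (1 + 1/n)^n := by
      rw [← mul_pow]; congr 1; field_simp
    have h2 : ((1:ℝ) + 1/n)^n ≤ Real.exp 1 := by
      calc ((1:ℝ) + 1/n)^n ≤ (Real.exp (1/n))^n := by
            refine pow_le_pow_left₀ (by positivity) ?_ n
            have := Real.add_one_le_exp (1/(n:ℝ))
            linarith
        _ = Real.exp 1 := by
            rw [← Real.exp_nat_mul]
            congr 1; field_simp
    have h3 : Real.exp 1 ≤ 3 := by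
      have := Real.exp_one_lt_d9
      linarith
    push_cast
    calc ((n:ℝ)+1)^n = (n:ℝ)^n * (1 + 1/n)^n := h1
      _ ≤ (n:ℝ)^n * 3 := by
          refine mul_le_mul_of_nonneg_left (h2.trans h3) (by positivity)
      _ = 3 * (n:ℝ)^n := by ring
  exact_mod_cast hR

lemma pow_self_le (n : ℕ) : n^n ≤ 3^n * n ! := by
  induction n with
  | zero => simp
  | succ n ih =>
    calc (n+1)^(n+1) = (n+1) * (n+1)^n := by ring
      _ ≤ (n+1) * (3 * n^n) := Nat.mul_le_mul_left _ (succ_pow_le_three_mul n)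
      _ ≤ (n+1) * (3 * (3^n * n !)) := by
          refine Nat.mul_le_mul_left _ (Nat.mul_le_mul_left _ ih)
      _ = 3^(n+1) * (n+1) ! := by rw [Nat.factorial_succ]; ring

lemma choose_mul_fact_le (N k : ℕ) : N.choose k * k ! ≤ N ^ k := by
  calc N.choose k * k ! = k ! * N.choose k := Nat.mul_comm _ _
    _ = N.descFactorial k := (Nat.descFactorial_eq_factorial_mul_choose N k).symm
    _ ≤ N ^ k := Nat.descFactorial_le_pow N k

lemma S_bound (n N : ℕ) (h1 : 1 ≤ n) (h2 : n ≤ N) :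
    (∑ k ∈ range n, 2^k * N.choose k) * n^n ≤ (12*N)^n := by
  have hterm : ∀ k, k < n → 2^k * N.choose k * ((n-1) !) ≤ (2*N)^(n-1) := by
    intro k hk
    have hfact : ((n-1) !) ≤ k ! * (2*N) ^ (n-1-k) := by
      have := fact_le_pow_mul k (2*N) (n-1-k) (by omega)
      rwa [show k + (n-1-k) = n-1 by omega] at this
    calc 2^k * N.choose k * ((n-1) !)
        ≤ 2^k * N.choose k * (k ! * (2*N) ^ (n-1-k)) :=
          Nat.mul_le_mul_left _ hfact
      _ = 2^k * (N.choose k * k !) * (2*N) ^ (n-1-k) := by ring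
      _ ≤ 2^k * N^k * (2*N) ^ (n-1-k) :=
          Nat.mul_le_mul_right _ (Nat.mul_le_mul_left _ (choose_mul_fact_le N k))
      _ = (2*N)^k * (2*N) ^ (n-1-k) := by rw [mul_pow 2 N k]
      _ = (2*N)^(n-1) := by rw [← pow_add]; congr 1; omega
  have hsum : (∑ k ∈ range n, 2^k * N.choose k) * ((n-1) !) ≤ n * (2*N)^(n-1) := by
    rw [Finset.sum_mul]
    calc ∑ k ∈ range n, 2^k * N.choose k * ((n-1) !)
        ≤ ∑ k ∈ range n, (2*N)^(n-1) :=
          Finset.sum_le_sum fun k hk => hterm k (mem_range.mp hk)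
      _ = n * (2*N)^(n-1) := by rw [Finset.sum_const, card_range, smul_eq_mul]
  have hn2 : n * n ≤ 2^n * N := by
    calc n * n ≤ 2^n * n := Nat.mul_le_mul_right _ (Nat.lt_two_pow_self (n := n)).le
      _ ≤ 2^n * N := Nat.mul_le_mul_left _ h2
  calc (∑ k ∈ range n, 2^k * N.choose k) * n^n
      ≤ (∑ k ∈ range n, 2^k * N.choose k) * (3^n * n !) :=
        Nat.mul_le_mul_left _ (pow_self_le n)
    _ = (∑ k ∈ range n, 2^k * N.choose k) * (3^n * (n * ((n-1) !))) := by
        rw [show n ! = n * ((n-1) !) by rw [← Nat.succ_pred_eq_of_pos h1]; rfl]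
    _ = 3^n * n * ((∑ k ∈ range n, 2^k * N.choose k) * ((n-1) !)) := by ring
    _ ≤ 3^n * n * (n * (2*N)^(n-1)) := Nat.mul_le_mul_left _ hsum
    _ = 3^n * (n * n) * (2*N)^(n-1) := by ring
    _ ≤ 3^n * (2^n * N) * (2*N)^(n-1) := Nat.mul_le_mul_right _ (Nat.mul_le_mul_left _ hn2)
    _ = 3^n * 2^n * (2*N)^(n-1) * N := by ring
    _ ≤ 3^n * 2^n * (2^n * N^(n-1)) * N := by
        refine Nat.mul_le_mul_right _ (Nat.mul_le_mul_left _ ?_)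
        rw [mul_pow]
        exact Nat.mul_le_mul_right _ (Nat.pow_le_pow_right (by omega) (by omega))
    _ = (12)^n * (N^(n-1) * N) := by
        have h12 : (12:ℕ)^n = 3^n * 2^n * 2^n := by
          rw [show (12:ℕ) = 3*2*2 by rfl, mul_pow, mul_pow]
        rw [h12]; ring
    _ = (12)^n * N^n := by
        congr 1
        rw [← pow_succ]; congr 1; omega
    _ = (12*N)^n := by rw [mul_pow]


end TuranAux

/-- **Turán's first main theorem** of the power-sum method: there is an absolute
constant `A > 0` such that for any `n ≥ 1` distinct complex numbers `z₁,…,zₙ` of modulus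
at least `1`, any coefficients `b₁,…,bₙ ∈ ℂ`, and any `m ≥ 0`, some power sum
`s_v = ∑_j b_j z_j^v` with `m+1 ≤ v ≤ m+n` satisfies
`|s_v| ≥ (n/(A(m+n)))^n |s₀|`. -/
theorem turan_first_main_theorem :
    ∃ A : ℝ, 0 < A ∧
      ∀ (n : ℕ), 1 ≤ n → ∀ (z b : Fin n → ℂ), Function.Injective z →
        (∀ j, 1 ≤ ‖z j‖) → ∀ m : ℕ, ∃ v : ℕ, m + 1 ≤ v ∧ v ≤ m + n ∧
          ((n : ℝ) / (A * (m + n))) ^ n * ‖∑ j, b j‖ ≤ ‖∑ j, b j * z j ^ v‖ := by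
  classical
  refine ⟨12, by norm_num, fun n hn z b _ hz m => ?_⟩
  set N := m + n with hN
  have hz0 : ∀ j, z j ≠ 0 := by
    intro j h
    have := hz j
    rw [h, norm_zero] at this
    linarith
  -- the list of inverses
  set l : List ℂ := List.ofFn (fun j : Fin n => (z j)⁻¹) with hldef
  have hlen : l.length = n := by simp [hldef]
  have hl : ∀ w ∈ l, ‖w‖ ≤ 1 := by
    intro w hw
    rw [hldef, List.mem_ofFn] at hw
    obtain ⟨j, rfl⟩ := hw
    rw [norm_inv]
    exact inv_le_one_of_one_le₀ (hz j)
  obtain ⟨Q, R, hid, -, -, hRd, hRs⟩ :=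
    TuranAux.key N l (by omega) (by omega) hl
  rw [hlen] at hRd hRs
  -- interpolation property
  have heval : ∀ j : Fin n, (1 : ℂ) = ∑ i ∈ range n, R.coeff i * z j ^ (N - i) := by
    intro j
    have hmem : (X - C ((z j)⁻¹)) ∈ l.map fun w => (X : ℂ[X]) - C w := by
      refine List.mem_map_of_mem ?_
      rw [hldef, List.mem_ofFn]
      exact ⟨j, rfl⟩
    have hPe : eval ((z j)⁻¹) ((l.map fun w => (X : ℂ[X]) - C w).prod) = 0 := by
      rw [eval_list_prod]
      refine List.prod_eq_zero ?_
      have : (0 : ℂ) = eval ((z j)⁻¹) (X - C ((z j)⁻¹)) := by simp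
      rw [this]
      exact List.mem_map_of_mem hmem
    have hev1 : ((z j)⁻¹) ^ N = R.eval ((z j)⁻¹) := by
      have := congrArg (eval ((z j)⁻¹)) hid
      simpa [eval_mul, eval_add, eval_pow, hPe] using this
    have hev2 : R.eval ((z j)⁻¹) = ∑ i ∈ range n, R.coeff i * ((z j)⁻¹) ^ i :=
      eval_eq_sum_range' hRd _
    have hzi : ∀ i ∈ range n, (z j) ^ N * ((z j)⁻¹) ^ i = z j ^ (N - i) := by
      intro i hi
      rw [mem_range] at hi
      rw [inv_pow, ← pow_sub₀ (z j) (hz0 j) (by omega)]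
    calc (1 : ℂ) = (z j) ^ N * ((z j)⁻¹) ^ N := by
          rw [← mul_pow, mul_inv_cancel₀ (hz0 j), one_pow]
      _ = (z j) ^ N * ∑ i ∈ range n, R.coeff i * ((z j)⁻¹) ^ i := by rw [hev1, hev2]
      _ = ∑ i ∈ range n, R.coeff i * ((z j) ^ N * ((z j)⁻¹) ^ i) := by
          rw [Finset.mul_sum]
          exact Finset.sum_congr rfl fun i _ => by ring
      _ = ∑ i ∈ range n, R.coeff i * z j ^ (N - i) :=
          Finset.sum_congr rfl fun i hi => by rw [hzi i hi]
  have hs0 : ∑ j, b j = ∑ i ∈ range n, R.coeff i * ∑ j, b j * z j ^ (N - i) := by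
    calc ∑ j, b j = ∑ j, b j * ∑ i ∈ range n, R.coeff i * z j ^ (N - i) := by
          exact Finset.sum_congr rfl fun j _ => by rw [← heval j, mul_one]
      _ = ∑ j, ∑ i ∈ range n, b j * (R.coeff i * z j ^ (N - i)) := by
          exact Finset.sum_congr rfl fun j _ => Finset.mul_sum _ _ _
      _ = ∑ i ∈ range n, ∑ j, b j * (R.coeff i * z j ^ (N - i)) := Finset.sum_comm
      _ = ∑ i ∈ range n, R.coeff i * ∑ j, b j * z j ^ (N - i) := by
          refine Finset.sum_congr rfl fun i _ => ?_
          rw [Finset.mul_sum]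
          exact Finset.sum_congr rfl fun j _ => by ring
  -- choose maximizing index
  obtain ⟨i₀, hi₀mem, hi₀⟩ := Finset.exists_max_image (range n)
    (fun i => ‖∑ j, b j * z j ^ (N - i)‖) ⟨0, mem_range.mpr (by omega)⟩
  rw [mem_range] at hi₀mem
  refine ⟨N - i₀, by omega, by omega, ?_⟩
  set B : ℝ := ∑ k ∈ range n, 2 ^ k * (N.choose k : ℝ) with hBdef
  have hSnn : (0 : ℝ) ≤ ‖∑ j, b j * z j ^ (N - i₀)‖ := norm_nonneg _
  have hnorm : ‖∑ j, b j‖ ≤ B * ‖∑ j, b j * z j ^ (N - i₀)‖ := by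
    rw [hs0]
    calc ‖∑ i ∈ range n, R.coeff i * ∑ j, b j * z j ^ (N - i)‖
        ≤ ∑ i ∈ range n, ‖R.coeff i * ∑ j, b j * z j ^ (N - i)‖ := norm_sum_le _ _
      _ ≤ ∑ i ∈ range n, ‖R.coeff i‖ * ‖∑ j, b j * z j ^ (N - i₀)‖ := by
          refine Finset.sum_le_sum fun i hi => ?_
          rw [norm_mul]
          exact mul_le_mul_of_nonneg_left (hi₀ i hi) (norm_nonneg _)
      _ = (∑ i ∈ range n, ‖R.coeff i‖) * ‖∑ j, b j * z j ^ (N - i₀)‖ :=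
          (Finset.sum_mul _ _ _).symm
      _ ≤ B * ‖∑ j, b j * z j ^ (N - i₀)‖ := mul_le_mul_of_nonneg_right hRs hSnn
  -- numeric bound
  have hNpos : (0 : ℝ) < 12 * (N : ℝ) := by
    have : 1 ≤ N := by omega
    have : (1 : ℝ) ≤ (N : ℝ) := by exact_mod_cast this
    linarith
  have hB : ((n : ℝ) / (12 * N)) ^ n * B ≤ 1 := by
    have hnat := TuranAux.S_bound n N hn (by omega)
    have hcast : B * (n : ℝ) ^ n ≤ (12 * (N : ℝ)) ^ n := by
      have : ((∑ k ∈ range n, 2 ^ k * N.choose k) * n ^ n : ℕ) ≤ ((12 * N : ℕ) ^ n : ℕ) := hnat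
      calc B * (n : ℝ) ^ n = (((∑ k ∈ range n, 2 ^ k * N.choose k) * n ^ n : ℕ) : ℝ) := by
            rw [hBdef]; push_cast; ring
        _ ≤ (((12 * N : ℕ) ^ n : ℕ) : ℝ) := by exact_mod_cast this
        _ = (12 * (N : ℝ)) ^ n := by push_cast; ring
    rw [div_pow, div_mul_eq_mul_div, div_le_one (by positivity)]
    nlinarith [hcast]
  have hgoal : ((n : ℝ) / (12 * N)) ^ n * ‖∑ j, b j‖ ≤ ‖∑ j, b j * z j ^ (N - i₀)‖ := by
    calc ((n : ℝ) / (12 * N)) ^ n * ‖∑ j, b j‖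
        ≤ ((n : ℝ) / (12 * N)) ^ n * (B * ‖∑ j, b j * z j ^ (N - i₀)‖) :=
          mul_le_mul_of_nonneg_left hnorm (by positivity)
      _ = (((n : ℝ) / (12 * N)) ^ n * B) * ‖∑ j, b j * z j ^ (N - i₀)‖ := by ring
      _ ≤ 1 * ‖∑ j, b j * z j ^ (N - i₀)‖ := mul_le_mul_of_nonneg_right hB hSnn
      _ = ‖∑ j, b j * z j ^ (N - i₀)‖ := one_mul _
  have hcast2 : ((N : ℕ) : ℝ) = (m : ℝ) + (n : ℝ) := by rw [hN]; push_cast; ring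
  rw [← hcast2]
  exact hgoal
end
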